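/- Let q be a prime power and k, s, n positive integers with s < k, q^k − 1 dividing n, and X^{q^k − 1} + X^{q^s − 1} + 1 irreducible over 𝔽_q. Let m be a positive integer dividing q^n − 1, set t := gcd(n, s), and let V be the k-dimensional 𝔽_q-subspace of 𝔽_{q^n} whose subspace polynomial is L_V(X) = X^{q^k} + X^{q^s} + X. Then the m-quasi cyclic code C := {α^m V : α ∈ 𝔽_{q^n}^*} satisfies m·(q^t − 1)·|C| ≥ q^n − 1; in particular, if gcd(n, s) = 1 then m·(q − 1)·|C| ≥ q^n − 1. -/

import Mathlib

open Polynomial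

/-- The `m`-quasi cyclic shift of a subspace `V` by `a`: `a • V = {a * v : v ∈ V}`. -/
noncomputable def qshift {K F : Type*} [Field K] [Field F] [Algebra K F]
    (a : F) (V : Submodule K F) : Submodule K F :=
  V.map (LinearMap.mulLeft K a)

/-- The subspace polynomial `L_V(X) = ∏_{v ∈ V} (X - v)` of a subspace `V` of a
finite field. -/
noncomputable def subspacePoly {K F : Type*} [Field K] [Field F] [Algebra K F] [Fintype F]
    (V : Submodule K F) : F[X] :=
  ∏ v ∈ (Set.toFinite (V : Set F)).toFinset, (X - C v)

/-- The subspace distance `d(U,V) = dim U + dim V - 2 dim (U ⊓ V)`. -/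
noncomputable def subspaceDist {K F : Type*} [Field K] [Field F] [Algebra K F]
    (U V : Submodule K F) : ℕ :=
  Module.finrank K U + Module.finrank K V - 2 * Module.finrank K ↥(U ⊓ V)

/-- Euclid-style descent for Frobenius-type fixed points. -/
lemma frob_gcd {F : Type*} [Monoid F] (q : ℕ) (γ : F) :
    ∀ a b : ℕ, γ ^ q ^ a = γ → γ ^ q ^ b = γ → γ ^ q ^ Nat.gcd a b = γ := by
  have hmul : ∀ c j : ℕ, γ ^ q ^ c = γ → γ ^ q ^ (c * j) = γ := by
    intro c j hc
    induction j with
    | zero => simp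
    | succ j ih =>
        have : q ^ (c * (j + 1)) = q ^ (c * j) * q ^ c := by ring
        rw [this, pow_mul, ih, hc]
  intro a b
  induction a, b using Nat.gcd.induction with
  | H0 b => intro _ hb; simpa using hb
  | H1 a b ha ih =>
      intro hA hB
      rw [Nat.gcd_rec]
      apply ih _ hA
      have hb' : γ ^ q ^ (a * (b / a) + b % a) = γ := by
        rw [Nat.div_add_mod] at *
        exact hB
      have : γ ^ q ^ (b % a) = γ := by
        rw [pow_add, pow_mul, hmul _ _ hA] at hb'
        exact hb'
      exact this

/-- Key stabilizer lemma: if `γ ≠ 0` stabilizes `V` whose subspace polynomial is the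
trinomial, then `γ ^ (q ^ s) = γ`. -/
lemma stab_pow_eq {K F : Type*} [Field K] [Fintype K] [Field F] [Fintype F] [Algebra K F]
    (q k s : ℕ) (hq : Fintype.card K = q) (hs : 0 < s) (hsk : s < k)
    (V : Submodule K F) (hVk : Module.finrank K ↥V = k)
    (hLV : subspacePoly V = X ^ q ^ k + X ^ q ^ s + X)
    (γ : F) (hγ : γ ≠ 0) (hstab : qshift γ V = V) : γ ^ q ^ s = γ ∧ γ ^ q ^ k = γ := by
  classical
  have hq2 : 1 < q := hq ▸ Fintype.one_lt_card
  have h1s : 1 < q ^ s := Nat.one_lt_pow (by omega) hq2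
  have hsk' : q ^ s < q ^ k := Nat.pow_lt_pow_right hq2 hsk
  have h1k : 1 < q ^ k := lt_trans h1s hsk'
  set Vf : Finset F := (Set.toFinite (V : Set F)).toFinset with hVf
  have hmem : ∀ x : F, x ∈ Vf ↔ x ∈ V := by
    intro x; simp only [hVf, Set.Finite.mem_toFinset]; exact Iff.rfl
  have hVmem : ∀ x : F, γ * x ∈ V ↔ x ∈ V := by
    intro x
    constructor
    · intro h
      rw [← hstab] at h
      obtain ⟨y, hy, hyx⟩ := h
      simp only [LinearMap.mulLeft_apply] at hyx
      rwa [mul_left_cancel₀ hγ hyx] at hy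
    · intro h
      rw [← hstab]
      exact ⟨x, h, by simp⟩
  have himg : Vf.image (fun v => γ⁻¹ * v) = Vf := by
    ext x
    simp only [Finset.mem_image, hmem]
    constructor
    · rintro ⟨v, hv, rfl⟩
      rw [← hVmem, mul_inv_cancel_left₀ hγ]; exact hv
    · intro hx
      exact ⟨γ * x, (hVmem x).2 hx, inv_mul_cancel_left₀ hγ x⟩
  have hcard : Vf.card = q ^ k := by
    have hVfin : Vf = (V : Set F).toFinset := by
      ext x; simp [hmem]
    rw [hVfin, Set.toFinset_card]
    have : Fintype.card ↥(V : Set F) = Fintype.card ↥V := rfl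
    rw [this, Module.card_eq_pow_finrank (K := K), hq, hVk]
  have hprod : ∏ v ∈ Vf, (X - C v) = X ^ q ^ k + X ^ q ^ s + X := hLV
  have hA : ∏ v ∈ Vf, (C γ * X - C v)
      = C (γ ^ q ^ k) * (X ^ q ^ k + X ^ q ^ s + X) := by
    have step1 : ∏ v ∈ Vf, (C γ * X - C v)
        = ∏ v ∈ Vf, (C γ * (X - C (γ⁻¹ * v))) := by
      refine Finset.prod_congr rfl fun v _ => ?_
      rw [mul_sub, ← C_mul, mul_inv_cancel_left₀ hγ]
    rw [step1, Finset.prod_mul_distrib, Finset.prod_const, hcard]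
    have step2 : ∏ v ∈ Vf, (X - C (γ⁻¹ * v))
        = ∏ w ∈ Vf.image (fun v => γ⁻¹ * v), (X - C w) := by
      rw [Finset.prod_image]
      intro a _ b _ h
      exact mul_left_cancel₀ (inv_ne_zero hγ) h
    rw [step2, himg, hprod, C_pow]
  have hB : ∏ v ∈ Vf, (C γ * X - C v)
      = C (γ ^ q ^ k) * X ^ q ^ k + C (γ ^ q ^ s) * X ^ q ^ s + C γ * X := by
    have : ∏ v ∈ Vf, (C γ * X - C v)
        = (∏ v ∈ Vf, (X - C v)).comp (C γ * X) := by
      rw [Polynomial.prod_comp]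
      refine Finset.prod_congr rfl fun v _ => ?_
      simp [sub_comp]
    rw [this, hprod]
    rw [add_comp, add_comp, X_pow_comp, X_pow_comp, X_comp, mul_pow, mul_pow, ← C_pow, ← C_pow]
  have heq := hA.symm.trans hB
  have hcs : γ ^ q ^ k = γ ^ q ^ s := by
    have := congrArg (fun p => coeff p (q ^ s)) heq
    simp only [coeff_add, coeff_C_mul, coeff_X_pow, coeff_X, mul_add] at this
    simp [show (1:ℕ) ≠ q ^ s by omega] at this
    simpa using this
  have hc1 : γ ^ q ^ k = γ := by
    have := congrArg (fun p => coeff p 1) heq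
    simp only [coeff_add, coeff_C_mul, coeff_X_pow, coeff_X, mul_add] at this
    simp [show (1:ℕ) ≠ q ^ k by omega, show (1:ℕ) ≠ q ^ s by omega] at this
    exact this
  exact ⟨hcs ▸ hc1, hc1⟩

theorem trinomial_quasi_orbit_code_size
    {K F : Type*} [Field K] [Fintype K] [Field F] [Fintype F] [Algebra K F]
    (q n k s m : ℕ) (hq : Fintype.card K = q) (hn : 0 < n)
    (hF : Module.finrank K F = n) (hs : 0 < s) (hsk : s < k)
    (hdvd : q ^ k - 1 ∣ n)
    (hirr : Irreducible (X ^ (q ^ k - 1) + X ^ (q ^ s - 1) + 1 : K[X]))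
    (hm : 0 < m) (hmdvd : m ∣ q ^ n - 1)
    (V : Submodule K F) (hVk : Module.finrank K ↥V = k)
    (hLV : subspacePoly V = X ^ q ^ k + X ^ q ^ s + X) :
    q ^ n - 1 ≤
      m * (q ^ Nat.gcd n s - 1) *
        Set.ncard {W : Submodule K F | ∃ α : F, α ≠ 0 ∧ W = qshift (α ^ m) V} ∧
    (Nat.gcd n s = 1 →
      q ^ n - 1 ≤
        m * (q - 1) *
          Set.ncard {W : Submodule K F | ∃ α : F, α ≠ 0 ∧ W = qshift (α ^ m) V}) := by
  classical
  have hq2 : 1 < q := hq ▸ Fintype.one_lt_card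
  set t := Nat.gcd n s with ht
  have hts : t ≤ s := Nat.le_of_dvd hs (Nat.gcd_dvd_right n s)
  have htpos : 0 < t := Nat.gcd_pos_of_pos_left s hn
  have hqt : 1 < q ^ t := Nat.one_lt_pow (by omega) hq2
  have hcardF : Fintype.card F = q ^ n := by
    rw [Module.card_eq_pow_finrank (K := K), hq, hF]
  set g : F → Submodule K F := fun α => qshift (α ^ m) V with hg
  set A : Finset F := Finset.univ.filter (· ≠ 0) with hA
  have hAcard : A.card = q ^ n - 1 := by
    have : A = Finset.univ.erase (0 : F) := by
      ext x; simp [hA, Finset.mem_erase]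
    rw [this, Finset.card_erase_of_mem (Finset.mem_univ 0), Finset.card_univ, hcardF]
  have hset : {W : Submodule K F | ∃ α : F, α ≠ 0 ∧ W = qshift (α ^ m) V}
      = ↑(A.image g) := by
    ext W
    simp only [Set.mem_setOf_eq, Finset.coe_image, Set.mem_image, Finset.mem_coe,
      hA, Finset.mem_filter, Finset.mem_univ, true_and]
    constructor
    · rintro ⟨α, hα, rfl⟩; exact ⟨α, hα, rfl⟩
    · rintro ⟨α, hα, rfl⟩; exact ⟨α, hα, rfl⟩
  have hncard : Set.ncard {W : Submodule K F | ∃ α : F, α ≠ 0 ∧ W = qshift (α ^ m) V}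
      = (A.image g).card := by
    rw [hset, Set.ncard_coe_finset]
  have hqshift_comp : ∀ (a b : F) (W : Submodule K F),
      qshift a (qshift b W) = qshift (a * b) W := by
    intro a b W
    simp only [qshift]
    rw [← Submodule.map_comp]
    congr 1
    ext x
    simp [mul_assoc]
  have hqshift_one : ∀ W : Submodule K F, qshift (1 : F) W = W := by
    intro W
    simp only [qshift]
    rw [LinearMap.mulLeft_one, Submodule.map_id]
  have hmain : A.card ≤ m * (q ^ t - 1) * (A.image g).card := by
    apply Finset.card_le_mul_card_image
    intro W hW
    obtain ⟨α₀, hα₀A, hα₀⟩ := Finset.mem_image.1 hW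
    have hα₀0 : α₀ ≠ 0 := by
      rw [hA] at hα₀A; simpa using (Finset.mem_filter.1 hα₀A).2
    set R : Finset F := (nthRoots (m * (q ^ t - 1)) (1 : F)).toFinset with hR
    have hRcard : R.card ≤ m * (q ^ t - 1) :=
      le_trans (Multiset.toFinset_card_le _) (Polynomial.card_nthRoots _ _)
    refine le_trans (Finset.card_le_card_of_injOn (fun α => α * α₀⁻¹) ?_ ?_) hRcard
    · intro α hα
      have hα0 : α ≠ 0 := by
        rw [hA] at hα; simpa using (Finset.mem_filter.1 (Finset.mem_filter.1 hα).1).2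
      have hgα : g α = W := (Finset.mem_filter.1 hα).2
      set γ : F := (α * α₀⁻¹) ^ m with hγdef
      have hγ0 : γ ≠ 0 := pow_ne_zero _ (mul_ne_zero hα0 (inv_ne_zero hα₀0))
      have hstab : qshift γ V = V := by
        have h1 : γ = (α₀ ^ m)⁻¹ * α ^ m := by
          rw [hγdef, mul_pow, inv_pow]; ring
        rw [h1, ← hqshift_comp]
        have : qshift (α ^ m) V = qshift (α₀ ^ m) V := by
          have := hgα.trans hα₀.symm
          simpa [hg] using this
        rw [this, hqshift_comp, inv_mul_cancel₀ (pow_ne_zero m hα₀0), hqshift_one]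
      obtain ⟨hγs, -⟩ := stab_pow_eq q k s hq hs hsk V hVk hLV γ hγ0 hstab
      have hγn : γ ^ q ^ n = γ := by
        have h1 : γ ^ (q ^ n - 1) = 1 := by
          have := FiniteField.pow_card_sub_one_eq_one γ hγ0
          rwa [hcardF] at this
        calc γ ^ q ^ n = γ ^ (q ^ n - 1) * γ := by
              rw [← pow_succ]; congr 1
              have := pow_pos (show 0 < q by omega) n; omega
          _ = γ := by rw [h1, one_mul]
      have hγt : γ ^ q ^ t = γ := frob_gcd q γ n s hγn hγs
      have hγt1 : γ ^ (q ^ t - 1) = 1 := by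
        have h2 : γ ^ (q ^ t - 1) * γ = 1 * γ := by
          rw [← pow_succ, one_mul]
          calc γ ^ (q ^ t - 1 + 1) = γ ^ q ^ t := by congr 1; omega
            _ = γ := hγt
        exact mul_right_cancel₀ hγ0 h2
      have hfin : (α * α₀⁻¹) ^ (m * (q ^ t - 1)) = 1 := by
        rw [pow_mul, ← hγdef, hγt1]
      rw [hR, Finset.mem_coe, Multiset.mem_toFinset, mem_nthRoots (Nat.mul_pos hm (by omega))]
      exact hfin
    · intro a _ b _ h
      exact mul_right_cancel₀ (inv_ne_zero hα₀0) h
  have hfirst : q ^ n - 1 ≤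
      m * (q ^ t - 1) *
        Set.ncard {W : Submodule K F | ∃ α : F, α ≠ 0 ∧ W = qshift (α ^ m) V} := by
    rw [hncard, ← hAcard]
    exact hmain
  refine ⟨hfirst, fun h1 => ?_⟩
  rw [← ht] at *
  rw [h1, pow_one] at hfirst
  exact hfirst
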